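/- For all integers k, m ≥ 1, one has Σ_{j=0}^{max(k,m)} [q·C(k,j) + (−1)^j·C(m,j)] · Σ_{l=0}^{k+m-j} C(k+m−j,l)·Ẽ_{k+m-j-l}·Ẽ_l = [2]_q · Σ_{l=0}^{m} C(m,l)·(−1)^{m−l}·Ẽ_{l+k}, where C(n,j) denotes the binomial coefficient (equal to 0 when j > n). -/

import Mathlib

open Finset Polynomial

noncomputable def Iop (E : ℕ → ℝ) : Polynomial ℝ →ₗ[ℝ] ℝ :=
  Polynomial.lsum fun n => LinearMap.toSpanSingleton ℝ ℝ (E n)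

lemma Iop_monomial (E : ℕ → ℝ) (n : ℕ) (a : ℝ) : Iop E (monomial n a) = a * E n := by
  simp [Iop, Polynomial.sum_monomial_index, LinearMap.toSpanSingleton_apply, smul_eq_mul]

lemma Iop_term (E : ℕ → ℝ) (a : ℝ) (n : ℕ) : Iop E (C a * X ^ n) = a * E n := by
  rw [C_mul_X_pow_eq_monomial]; exact Iop_monomial E n a

lemma key1 (q : ℝ) (E : ℕ → ℝ) (hE0 : E 0 = 1)
    (hE : ∀ n : ℕ, 1 ≤ n →
      q * ∑ j ∈ range (n + 1), (n.choose j : ℝ) * E j + E n = 0)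
    (P : Polynomial ℝ) :
    q * Iop E (P.comp (X + 1)) + Iop E P = (1 + q) * P.eval 0 := by
  induction P using Polynomial.induction_on' with
  | add p r hp hr =>
      simp only [add_comp, map_add, eval_add]
      linear_combination hp + hr
  | monomial n a =>
      have hcomp : (monomial n a).comp (X + 1) =
          ∑ j ∈ range (n + 1), C (a * (n.choose j : ℝ)) * X ^ j := by
        rw [monomial_comp, add_pow]
        rw [mul_sum]
        refine Finset.sum_congr rfl fun j hj => ?_
        rw [C_mul, C_eq_natCast]
        ring
      rw [hcomp, map_sum, Iop_monomial, eval_monomial]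
      simp only [Iop_term]
      rcases Nat.eq_zero_or_pos n with h0 | h1
      · subst h0; simp [hE0]; ring
      · have := hE n h1
        have h0n : (0:ℝ) ^ n = 0 := zero_pow (by omega)
        rw [h0n]
        simp only [mul_assoc, ← Finset.mul_sum]
        linear_combination a * this

noncomputable def psi (E : ℕ → ℝ) (n : ℕ) : Polynomial ℝ :=
  ∑ l ∈ range (n + 1), C ((n.choose l : ℝ) * E (n - l)) * X ^ l

lemma Iop_psi (E : ℕ → ℝ) (n : ℕ) :
    Iop E (psi E n) = ∑ l ∈ range (n + 1), (n.choose l : ℝ) * E (n - l) * E l := by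
  rw [psi, map_sum]
  refine Finset.sum_congr rfl fun l hl => ?_
  rw [Iop_term]

lemma psi_eval (E : ℕ → ℝ) (n : ℕ) (x : ℝ) :
    (psi E n).eval x = Iop E (taylor x ((X : Polynomial ℝ) ^ n)) := by
  have h1 : Iop E (taylor x ((X : Polynomial ℝ) ^ n))
      = ∑ i ∈ range (n + 1), (n.choose i : ℝ) * x ^ (n - i) * E i := by
    rw [taylor_apply, X_pow_comp, add_pow, map_sum]
    refine Finset.sum_congr rfl fun i hi => ?_
    have h : (X : Polynomial ℝ) ^ i * (C x) ^ (n - i) * ((n.choose i : ℕ) : Polynomial ℝ)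
        = C ((n.choose i : ℝ) * x ^ (n - i)) * X ^ i := by
      rw [C_mul, C_eq_natCast, ← C_pow]; ring
    rw [h, Iop_term]
  have h2 := Finset.sum_range_reflect
    (fun l => ((n.choose l : ℝ) * E (n - l)) * x ^ l) (n + 1)
  rw [h1, psi, eval_finset_sum]
  simp only [eval_mul, eval_C, eval_pow, eval_X]
  rw [← h2]
  refine Finset.sum_congr rfl fun i hi => ?_
  have hi' : i ≤ n := by have := mem_range.mp hi; omega
  have e1 : n + 1 - 1 - i = n - i := by omega
  rw [e1, Nat.choose_symm hi', Nat.sub_sub_self hi']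
  ring

lemma expandPowAux (a b : ℕ) (c : ℝ) :
    ∑ j ∈ range (a + 1), C ((a.choose j : ℝ) * c ^ j) * X ^ (a + b - j)
      = X ^ b * (X + C c) ^ a := by
  have h2 := Finset.sum_range_reflect
    (fun j => C ((a.choose j : ℝ) * c ^ j) * (X : Polynomial ℝ) ^ (a + b - j)) (a + 1)
  rw [← h2, add_pow, mul_sum]
  refine Finset.sum_congr rfl fun j hj => ?_
  have hj' : j ≤ a := by have := mem_range.mp hj; omega
  have e1 : a + 1 - 1 - j = a - j := by omega
  have e2 : a + b - (a - j) = b + j := by omega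
  rw [e1, Nat.choose_symm hj', e2]
  rw [C_mul, C_eq_natCast, ← C_pow]
  ring

theorem stmt_9 (q : ℝ) (hq0 : q ≠ 0) (hq1 : q ≠ -1)
    (E : ℕ → ℝ) (hE0 : E 0 = 1)
    (hE : ∀ n : ℕ, 1 ≤ n →
      q * ∑ j ∈ range (n + 1), (n.choose j : ℝ) * E j + E n = 0)
    (k m : ℕ) (hk : 1 ≤ k) (hm : 1 ≤ m) :
    ∑ j ∈ range (max k m + 1),
      (q * (k.choose j : ℝ) + (-1 : ℝ) ^ j * (m.choose j : ℝ)) *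
        ∑ l ∈ range (k + m - j + 1),
          ((k + m - j).choose l : ℝ) * E (k + m - j - l) * E l
    = (1 + q) * ∑ l ∈ range (m + 1), (m.choose l : ℝ) * (-1 : ℝ) ^ (m - l) * E (l + k) := by
  set H : Polynomial ℝ := X ^ k * (X - 1) ^ m with hH
  -- Step 1: LHS = Iop of a polynomial combination
  have hLHS : ∑ j ∈ range (max k m + 1),
      (q * (k.choose j : ℝ) + (-1 : ℝ) ^ j * (m.choose j : ℝ)) *
        ∑ l ∈ range (k + m - j + 1),
          ((k + m - j).choose l : ℝ) * E (k + m - j - l) * E l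
      = Iop E (∑ j ∈ range (max k m + 1),
          (q * (k.choose j : ℝ) + (-1 : ℝ) ^ j * (m.choose j : ℝ)) • psi E (k + m - j)) := by
    rw [map_sum]
    refine Finset.sum_congr rfl fun j hj => ?_
    rw [map_smul, smul_eq_mul, Iop_psi]
  rw [hLHS]
  -- Step 2: the polynomial combination equals (1+q) • H
  have hpoly : (∑ j ∈ range (max k m + 1),
      (q * (k.choose j : ℝ) + (-1 : ℝ) ^ j * (m.choose j : ℝ)) • (X : Polynomial ℝ) ^ (k + m - j))
      = q • (X ^ m * (X + 1) ^ k) + H := by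
    have split : ∀ j ∈ range (max k m + 1),
        (q * (k.choose j : ℝ) + (-1 : ℝ) ^ j * (m.choose j : ℝ)) • (X : Polynomial ℝ) ^ (k + m - j)
        = q • (C ((k.choose j : ℝ) * 1 ^ j) * X ^ (k + m - j))
          + C ((m.choose j : ℝ) * (-1 : ℝ) ^ j) * X ^ (m + k - j) := by
      intro j hj
      have e : m + k - j = k + m - j := by omega
      rw [e]
      simp only [add_smul, smul_eq_C_mul, C_mul, C_pow, C_neg, C_1, one_pow]
      ring
    rw [Finset.sum_congr rfl split, Finset.sum_add_distrib, ← Finset.smul_sum]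
    have h1 : ∑ j ∈ range (max k m + 1), C ((k.choose j : ℝ) * 1 ^ j) * (X:Polynomial ℝ) ^ (k + m - j)
        = X ^ m * (X + 1) ^ k := by
      rw [show (X ^ m * (X + 1) ^ k : Polynomial ℝ) = X ^ m * (X + C 1) ^ k by norm_num,
        ← expandPowAux k m 1]
      rw [Finset.sum_subset (by gcongr; omega : range (k+1) ⊆ range (max k m + 1))]
      intro j hj hj'
      have : k < j := by simp at hj hj'; omega
      simp [Nat.choose_eq_zero_of_lt this]
    have h2 : ∑ j ∈ range (max k m + 1), C ((m.choose j : ℝ) * (-1:ℝ) ^ j) * (X:Polynomial ℝ) ^ (m + k - j)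
        = X ^ k * (X + C (-1)) ^ m := by
      rw [← expandPowAux m k (-1)]
      rw [Finset.sum_subset (by gcongr; omega : range (m+1) ⊆ range (max k m + 1))]
      intro j hj hj'
      have : m < j := by simp at hj hj'; omega
      simp [Nat.choose_eq_zero_of_lt this]
    rw [h1, h2, hH]
    simp [sub_eq_add_neg]
  have hW : (∑ j ∈ range (max k m + 1),
      (q * (k.choose j : ℝ) + (-1 : ℝ) ^ j * (m.choose j : ℝ)) • psi E (k + m - j))
      = (1 + q) • H := by
    apply Polynomial.funext
    intro x
    rw [eval_finset_sum]
    simp only [eval_smul, smul_eq_mul, psi_eval]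
    have lin : ∑ j ∈ range (max k m + 1),
        (q * (k.choose j : ℝ) + (-1 : ℝ) ^ j * (m.choose j : ℝ)) *
          Iop E (taylor x ((X : Polynomial ℝ) ^ (k + m - j)))
        = Iop E (taylor x (∑ j ∈ range (max k m + 1),
            (q * (k.choose j : ℝ) + (-1 : ℝ) ^ j * (m.choose j : ℝ)) • (X : Polynomial ℝ) ^ (k + m - j))) := by
      rw [map_sum, map_sum]
      refine Finset.sum_congr rfl fun j hj => ?_
      rw [map_smul, map_smul, smul_eq_mul]
    rw [lin, hpoly]
    simp only [map_add, map_smul, smul_eq_mul]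
    have hA : taylor x (X ^ m * (X + 1) ^ k : Polynomial ℝ) = (taylor x H).comp (X + 1) := by
      simp only [taylor_apply, hH, mul_comp, pow_comp, X_comp, add_comp, sub_comp, one_comp, C_comp]
      ring
    rw [hA]
    have hk1 := key1 q E hE0 hE (taylor x H)
    have he : (taylor x H).eval 0 = H.eval x := by
      rw [← coeff_zero_eq_eval_zero, taylor_coeff_zero]
    linear_combination hk1 + (1 + q) * he
  rw [hW, map_smul, smul_eq_mul]
  congr 1
  -- Step 3: Iop E H = RHS sum
  have hHeq : H = ∑ j ∈ range (m + 1), C ((m.choose j : ℝ) * (-1 : ℝ) ^ j) * X ^ (m + k - j) := by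
    rw [expandPowAux m k (-1), hH]
    simp [sub_eq_add_neg]
  rw [hHeq, map_sum]
  have h2 := Finset.sum_range_reflect
    (fun l => (m.choose l : ℝ) * (-1 : ℝ) ^ (m - l) * E (l + k)) (m + 1)
  rw [← h2]
  refine Finset.sum_congr rfl fun j hj => ?_
  rw [Iop_term]
  have hj' : j ≤ m := by have := mem_range.mp hj; omega
  have e1 : m + 1 - 1 - j = m - j := by omega
  simp only [e1, Nat.choose_symm hj', Nat.sub_sub_self hj']
  have e2 : m - j + k = m + k - j := by omega
  rw [e2]
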